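/- arXiv:2203.01021 — 3 statements merged into one kernel-verified Lean document; each statement's English description precedes it below -/
import Mathlib

section
/- Let f : ℝ^d → ℝ be any function and g : [0,∞) → [0,∞) a monotonically decreasing function such that |f(x)| ≤ g(|x|) for all x ∈ ℝ^d and ∫₀^∞ g(r) r^{d-1} dr < ∞. Then the sum over z ∈ ℤ^d of |f(z)| is finite, and in fact ∑_{z∈ℤ^d} |f(z)| ≤ g(0) + ∑_{n=1}^{d} C(d,n) (2π^{n/2}/Γ(n/2)) ∫₀^∞ g(r) r^{n-1} dr. -/
open MeasureTheory Filter Topology Set Metric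
open scoped ENNReal NNReal

noncomputable section

/-- Embedding of the lattice ℤ^d into Euclidean space ℝ^d. -/
def latt (d : ℕ) (z : Fin d → ℤ) : EuclideanSpace ℝ (Fin d) := WithLp.toLp 2 (fun i => (z i : ℝ))


/-- half-open unit interval attached to a nonzero integer, pointing towards 0. -/
def zint (m : ℤ) : Set ℝ := if 0 < m then Ioc ((m:ℝ)-1) m else Ico (m:ℝ) ((m:ℝ)+1)

lemma zint_meas (m : ℤ) : MeasurableSet (zint m) := by
  unfold zint; split <;> measurability

lemma zint_vol (m : ℤ) : volume (zint m) = 1 := by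
  unfold zint; split <;> simp

lemma zint_abs_le {m : ℤ} (hm : m ≠ 0) {x : ℝ} (hx : x ∈ zint m) : |x| ≤ |(m:ℝ)| := by
  unfold zint at hx
  rcases lt_or_ge 0 m with h | h
  · rw [if_pos h] at hx
    have h1 : (1:ℝ) ≤ (m:ℝ) := by exact_mod_cast h
    have : 0 < x := lt_of_le_of_lt (by linarith) hx.1
    rw [abs_of_pos this, abs_of_pos (by exact_mod_cast h)]
    exact hx.2
  · rw [if_neg (not_lt.mpr h)] at hx
    have hm' : m < 0 := lt_of_le_of_ne h hm
    have h1 : (m:ℝ) + 1 ≤ 0 := by exact_mod_cast Int.add_one_le_iff.mpr hm'; 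
    have : x < 0 := lt_of_lt_of_le hx.2 (by exact_mod_cast h1)
    rw [abs_of_neg this, abs_of_neg (by exact_mod_cast hm')]
    linarith [hx.1]

lemma zint_eq_of_mem {m : ℤ} (hm : m ≠ 0) {x : ℝ} (hx : x ∈ zint m) :
    m = if 0 < x then ⌈x⌉ else ⌊x⌋ := by
  unfold zint at hx
  rcases lt_or_ge 0 m with h | h
  · rw [if_pos h] at hx
    have h1 : (1:ℝ) ≤ (m:ℝ) := by exact_mod_cast h
    have hx0 : 0 < x := lt_of_le_of_lt (by linarith) hx.1
    rw [if_pos hx0, eq_comm, Int.ceil_eq_iff]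
    exact ⟨hx.1, hx.2⟩
  · rw [if_neg (not_lt.mpr h)] at hx
    have hm' : m < 0 := lt_of_le_of_ne h hm
    have h1 : (m:ℝ) + 1 ≤ 0 := by exact_mod_cast Int.add_one_le_iff.mpr hm'
    have hx0 : ¬ (0 < x) := by push_neg; linarith [hx.2]
    rw [if_neg hx0, eq_comm, Int.floor_eq_iff]
    exact ⟨hx.1, hx.2⟩

lemma zint_disjoint {m m' : ℤ} (hm : m ≠ 0) (hm' : m' ≠ 0) (h : m ≠ m') :
    Disjoint (zint m) (zint m') := by
  rw [Set.disjoint_left]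
  intro x hx hx'
  exact h ((zint_eq_of_mem hm hx).trans (zint_eq_of_mem hm' hx').symm)

set_option maxHeartbeats 1000000 in
lemma cube_sum_le (n : ℕ) (G : ℝ → ℝ) (hGa : Antitone G) (hGm : Measurable G) :
    ∑' w : Fin n → {m : ℤ // m ≠ 0}, ENNReal.ofReal (G ‖latt n (fun j => (w j : ℤ))‖) ≤
      ∫⁻ x : EuclideanSpace ℝ (Fin n), ENNReal.ofReal (G ‖x‖) := by
  set F : (Fin n → ℝ) → ℝ≥0∞ := fun x => ENNReal.ofReal (G (Real.sqrt (∑ j, x j ^ 2))) with hF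
  have hFm : Measurable F := by fun_prop
  -- transfer RHS to the pi measure
  have hRHS : ∫⁻ x : EuclideanSpace ℝ (Fin n), ENNReal.ofReal (G ‖x‖) =
      ∫⁻ x : Fin n → ℝ, F x := by
    rw [← (EuclideanSpace.volume_preserving_symm_measurableEquiv_toLp (Fin n)).lintegral_comp hFm]
    refine lintegral_congr fun x => ?_
    show ENNReal.ofReal (G ‖x‖) = ENNReal.ofReal (G (Real.sqrt (∑ j, (MeasurableEquiv.toLp 2 (Fin n → ℝ)).symm x j ^ 2)))
    congr 2
    rw [EuclideanSpace.norm_eq]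
    congr 1
    refine Finset.sum_congr rfl fun j _ => ?_
    rw [Real.norm_eq_abs, sq_abs]
    rfl
  rw [hRHS]
  set C : (Fin n → {m : ℤ // m ≠ 0}) → Set (Fin n → ℝ) :=
    fun w => Set.pi Set.univ (fun j => zint (w j : ℤ))
  have hCmeas : ∀ w, MeasurableSet (C w) :=
    fun w => MeasurableSet.univ_pi fun j => zint_meas _
  have hCvol : ∀ w, volume (C w) = 1 := by
    intro w
    rw [volume_pi_pi]
    simp [zint_vol]
  have hCdisj : Pairwise (Function.onFun Disjoint C) := by
    intro w w' hww'
    have : ∃ j, (w j : ℤ) ≠ (w' j : ℤ) := by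
      by_contra hc
      push_neg at hc
      exact hww' (funext fun j => Subtype.ext (hc j))
    obtain ⟨j, hj⟩ := this
    rw [Function.onFun, Set.disjoint_left]
    intro x hx hx'
    exact Set.disjoint_left.mp (zint_disjoint (w j).2 (w' j).2 hj)
      (hx j (Set.mem_univ j)) (hx' j (Set.mem_univ j))
  have key : ∀ w : Fin n → {m : ℤ // m ≠ 0},
      ENNReal.ofReal (G ‖latt n (fun j => (w j : ℤ))‖) ≤ ∫⁻ x in C w, F x := by
    intro w
    have h1 : ENNReal.ofReal (G ‖latt n (fun j => (w j : ℤ))‖) =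
        ∫⁻ _ in C w, ENNReal.ofReal (G ‖latt n (fun j => (w j : ℤ))‖) := by
      rw [setLIntegral_const, hCvol, mul_one]
    rw [h1]
    refine setLIntegral_mono hFm fun x hx => ?_
    refine ENNReal.ofReal_le_ofReal (hGa ?_)
    rw [EuclideanSpace.norm_eq]
    refine Real.sqrt_le_sqrt (Finset.sum_le_sum fun j _ => ?_)
    have hle := zint_abs_le (w j).2 (hx j (Set.mem_univ j))
    calc x j ^ 2 = |x j| ^ 2 := (sq_abs _).symm
      _ ≤ |((w j : ℤ) : ℝ)| ^ 2 := pow_le_pow_left₀ (abs_nonneg _) hle 2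
      _ = ‖latt n (fun j => (w j : ℤ)) j‖ ^ 2 := by
          rw [Real.norm_eq_abs]; rfl
  calc ∑' w : Fin n → {m : ℤ // m ≠ 0}, ENNReal.ofReal (G ‖latt n (fun j => (w j : ℤ))‖)
      ≤ ∑' w : Fin n → {m : ℤ // m ≠ 0}, ∫⁻ x in C w, F x := ENNReal.tsum_le_tsum key
    _ = ∫⁻ x in ⋃ w, C w, F x := (lintegral_iUnion hCmeas hCdisj _).symm
    _ ≤ ∫⁻ x : Fin n → ℝ, F x := lintegral_mono' Measure.restrict_le_self le_rfl

lemma lintegral_norm_polar (n : ℕ) (hn : 0 < n) (f : ℝ → ℝ≥0∞) (hf : Measurable f) :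
    ∫⁻ x : EuclideanSpace ℝ (Fin n), f (‖x‖) =
      ((n : ℝ≥0∞) * volume (Metric.ball (0 : EuclideanSpace ℝ (Fin n)) 1)) *
        ∫⁻ y in Set.Ioi (0:ℝ), ENNReal.ofReal (y ^ (n - 1)) * f y := by
  set E := EuclideanSpace ℝ (Fin n)
  haveI : Nonempty (Fin n) := Fin.pos_iff_nonempty.mp hn
  haveI : Nontrivial E := by infer_instance
  have hdim : Module.finrank ℝ E = n := finrank_euclideanSpace_fin
  have hm1 : Measurable fun x : ({0}ᶜ : Set E) => f (‖(x : E)‖) := by fun_prop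
  calc ∫⁻ x : E, f (‖x‖)
      = ∫⁻ x : ({0}ᶜ : Set E), f (‖(x : E)‖) ∂(Measure.comap Subtype.val volume) := by
        rw [lintegral_subtype_comap (measurableSet_singleton (0:E)).compl (fun x => f ‖x‖),
          restrict_compl_singleton]
    _ = ∫⁻ p : sphere (0:E) 1 × Ioi (0:ℝ), f p.2 ∂(volume.toSphere.prod
          (.volumeIoiPow (Module.finrank ℝ E - 1))) := by
        refine Eq.trans ?_ ((volume.measurePreserving_homeomorphUnitSphereProd (E := E)).lintegral_comp
          (f := fun p : sphere (0:E) 1 × Ioi (0:ℝ) => f p.2) (by fun_prop))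
        simp
    _ = volume.toSphere (univ : Set (sphere (0:E) 1)) *
          ∫⁻ y : Ioi (0:ℝ), f y ∂(Measure.volumeIoiPow (Module.finrank ℝ E - 1)) := by
        rw [lintegral_prod _ (by fun_prop)]
        simp [lintegral_const, mul_comm]
    _ = ((n : ℝ≥0∞) * volume (Metric.ball (0 : E) 1)) *
          ∫⁻ y in Set.Ioi (0:ℝ), ENNReal.ofReal (y ^ (n - 1)) * f y := by
        rw [Measure.toSphere_apply_univ, hdim]
        congr 1
        rw [Measure.volumeIoiPow,
          lintegral_withDensity_eq_lintegral_mul _ (f := fun r : Ioi (0:ℝ) => ENNReal.ofReal ((r:ℝ) ^ (n-1))) (by fun_prop) (g := fun y : Ioi (0:ℝ) => f y) (by fun_prop)]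
        rw [show ((fun r : Ioi (0:ℝ) => ENNReal.ofReal ((r:ℝ)^(n-1))) * fun y : Ioi (0:ℝ) => f ↑y)
            = fun r : Ioi (0:ℝ) => ENNReal.ofReal ((r:ℝ)^(n-1)) * f ↑r from rfl,
          lintegral_subtype_comap measurableSet_Ioi (fun y : ℝ => ENNReal.ofReal (y^(n-1)) * f y)]

lemma ball_const (n : ℕ) (hn : 0 < n) :
    (n : ℝ≥0∞) * volume (Metric.ball (0 : EuclideanSpace ℝ (Fin n)) 1) =
      ENNReal.ofReal (2 * Real.pi ^ ((n : ℝ) / 2) / Real.Gamma ((n : ℝ) / 2)) := by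
  haveI : Nonempty (Fin n) := Fin.pos_iff_nonempty.mp hn
  have hΓ : 0 < Real.Gamma ((n : ℝ) / 2) := Real.Gamma_pos_of_pos (by positivity)
  rw [EuclideanSpace.volume_ball]
  simp only [Fintype.card_fin, ENNReal.ofReal_one, one_pow, one_mul]
  rw [show (n : ℝ≥0∞) = ENNReal.ofReal (n : ℝ) by simp, ← ENNReal.ofReal_mul (by positivity)]
  congr 1
  have hsq : Real.sqrt Real.pi ^ n = Real.pi ^ ((n : ℝ) / 2) := by
    rw [Real.sqrt_eq_rpow, ← Real.rpow_natCast (Real.pi ^ ((1:ℝ)/2)) n, ← Real.rpow_mul Real.pi_pos.le]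
    ring_nf
  have hΓ1 : Real.Gamma ((n : ℝ) / 2 + 1) = ((n : ℝ) / 2) * Real.Gamma ((n : ℝ) / 2) :=
    Real.Gamma_add_one (by positivity)
  rw [hsq, hΓ1]
  have hn' : (0:ℝ) < n := by exact_mod_cast hn
  field_simp


/-- equivalence between lattice points with support `S` and nonvanishing integer
vectors indexed by `Fin S.card`. -/
def suppEquiv (d : ℕ) (S : Finset (Fin d)) :
    {z : Fin d → ℤ // ∀ i, z i ≠ 0 ↔ i ∈ S} ≃ (Fin S.card → {m : ℤ // m ≠ 0}) where
  toFun z j := ⟨z.1 (S.equivFin.symm j), (z.2 _).mpr (S.equivFin.symm j).2⟩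
  invFun w := ⟨fun i => if h : i ∈ S then (w (S.equivFin ⟨i, h⟩) : ℤ) else 0, by
    intro i
    by_cases h : i ∈ S
    · simp only [h, dif_pos, iff_true]
      exact (w (S.equivFin ⟨i, h⟩)).2
    · simp [h]⟩
  left_inv z := by
    apply Subtype.ext
    funext i
    by_cases h : i ∈ S
    · simp [h]
    · simp only [h, dif_neg, not_false_iff]
      exact ((not_iff_not.mpr (z.2 i)).mpr h |> not_not.mp).symm ▸ rfl
  right_inv w := by
    funext j
    apply Subtype.ext
    simp only []
    rw [dif_pos (S.equivFin.symm j).2]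
    congr
    · exact (Equiv.apply_symm_apply _ _) ▸ rfl

lemma suppEquiv_norm (d : ℕ) (S : Finset (Fin d)) (z : {z : Fin d → ℤ // ∀ i, z i ≠ 0 ↔ i ∈ S}) :
    ‖latt d z.1‖ = ‖latt S.card (fun j => ((suppEquiv d S z) j : ℤ))‖ := by
  rw [EuclideanSpace.norm_eq, EuclideanSpace.norm_eq]
  congr 1
  have h1 : ∀ (m : ℕ) (y : Fin m → ℤ) (j : Fin m), ‖latt m y j‖ ^ 2 = ((y j : ℝ)) ^ 2 := by
    intro m y j
    rw [Real.norm_eq_abs, sq_abs]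
    rfl
  calc ∑ i, ‖latt d z.1 i‖ ^ 2 = ∑ i, ((z.1 i : ℝ)) ^ 2 := by
        exact Finset.sum_congr rfl fun i _ => h1 d z.1 i
    _ = ∑ i ∈ S, ((z.1 i : ℝ)) ^ 2 := by
        refine (Finset.sum_subset S.subset_univ ?_).symm
        intro i _ hi
        have : z.1 i = 0 := not_not.mp ((not_iff_not.mpr (z.2 i)).mpr hi)
        simp [this]
    _ = ∑ i : {i // i ∈ S}, ((z.1 i : ℝ)) ^ 2 := (Finset.sum_coe_sort S _).symm
    _ = ∑ j : Fin S.card, ((z.1 (S.equivFin.symm j) : ℝ)) ^ 2 :=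
        (Fintype.sum_equiv S.equivFin.symm _ _ fun j => rfl).symm
    _ = ∑ j, ‖latt S.card (fun j => ((suppEquiv d S z) j : ℤ)) j‖ ^ 2 :=
        (Finset.sum_congr rfl fun j _ =>
          (h1 S.card (fun j' => ((suppEquiv d S z) j' : ℤ)) j)).symm

lemma integ_pow_aux (G : ℝ → ℝ) (hGm : Measurable G) (hGa : Antitone G)
    (hG0 : ∀ r, 0 ≤ G r) (d : ℕ)
    (hint : IntegrableOn (fun r => G r * r ^ (d - 1)) (Set.Ioi (0:ℝ)))
    (n : ℕ) (hn1 : 1 ≤ n) (hnd : n ≤ d) :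
    IntegrableOn (fun r => G r * r ^ (n - 1)) (Set.Ioi (0:ℝ)) := by
  have hmble : AEStronglyMeasurable (fun r : ℝ => G r * r ^ (n - 1)) volume :=
    (hGm.mul (measurable_id.pow_const _)).aestronglyMeasurable
  have h1 : IntegrableOn (fun r => G r * r ^ (n - 1)) (Set.Ioc (0:ℝ) 1) := by
    refine Measure.integrableOn_of_bounded (M := G 0) (by simp) hmble ?_
    filter_upwards [ae_restrict_mem measurableSet_Ioc] with x hx
    rw [Real.norm_eq_abs, abs_of_nonneg (mul_nonneg (hG0 x) (pow_nonneg hx.1.le _))]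
    calc G x * x ^ (n-1) ≤ G 0 * 1 := by
          refine mul_le_mul (hGa hx.1.le) ?_ (pow_nonneg hx.1.le _) (hG0 0)
          exact pow_le_one₀ hx.1.le hx.2
      _ = G 0 := mul_one _
  have h2 : IntegrableOn (fun r => G r * r ^ (n - 1)) (Set.Ioi (1:ℝ)) := by
    refine Integrable.mono (hint.mono_set (fun x hx => Set.mem_Ioi.mpr (lt_trans one_pos hx))) hmble.restrict ?_
    filter_upwards [ae_restrict_mem measurableSet_Ioi] with x (hx : 1 < x)
    have hx0 : (0:ℝ) ≤ x := by linarith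
    rw [Real.norm_eq_abs, Real.norm_eq_abs,
      abs_of_nonneg (mul_nonneg (hG0 x) (pow_nonneg hx0 _)),
      abs_of_nonneg (mul_nonneg (hG0 x) (pow_nonneg hx0 _))]
    exact mul_le_mul_of_nonneg_left (pow_le_pow_right₀ hx.le (by omega)) (hG0 x)
  have : IntegrableOn (fun r => G r * r ^ (n - 1)) (Set.Ioc (0:ℝ) 1 ∪ Set.Ioi 1) := h1.union h2
  exact this.mono_set (by
    intro x hx
    rcases le_or_gt x 1 with h | h
    · exact Or.inl ⟨hx, h⟩
    · exact Or.inr h)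


set_option maxHeartbeats 1000000 in
/-- **Integral test for series estimates — I.**
If `|f x| ≤ g ‖x‖` with `g : [0,∞) → [0,∞)` monotonically decreasing and
`∫₀^∞ g(r) r^{d-1} dr < ∞`, then `∑_{z ∈ ℤ^d} |f z|` is finite and bounded by
`g 0 + ∑_{n=1}^d C(d,n) (2 π^{n/2} / Γ(n/2)) ∫₀^∞ g(r) r^{n-1} dr`. -/
theorem integral_test_series_estimate
    (d : ℕ) (hd : 0 < d)
    (f : EuclideanSpace ℝ (Fin d) → ℝ) (g : ℝ → ℝ)
    (hg_anti : AntitoneOn g (Set.Ici 0))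
    (hg_nonneg : ∀ r ∈ Set.Ici (0 : ℝ), 0 ≤ g r)
    (hfg : ∀ x, |f x| ≤ g ‖x‖)
    (hint : IntegrableOn (fun r => g r * r ^ (d - 1)) (Set.Ioi (0 : ℝ))) :
    Summable (fun z : Fin d → ℤ => |f (latt d z)|) ∧
      ∑' z : Fin d → ℤ, |f (latt d z)| ≤
        g 0 + ∑ n ∈ Finset.Icc 1 d,
          (d.choose n : ℝ) * (2 * Real.pi ^ ((n : ℝ) / 2) / Real.Gamma ((n : ℝ) / 2)) *
            ∫ r in Set.Ioi (0 : ℝ), g r * r ^ (n - 1) := by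
  classical
  set G : ℝ → ℝ := fun r => g (max r 0) with hGdef
  have hGa : Antitone G := fun a b hab =>
    hg_anti (mem_Ici.mpr (le_max_right a 0)) (mem_Ici.mpr (le_max_right b 0))
      (max_le_max hab le_rfl)
  have hGm : Measurable G := hGa.measurable
  have hG0 : ∀ r, 0 ≤ G r := fun r => hg_nonneg _ (mem_Ici.mpr (le_max_right r 0))
  have hGr : ∀ r, 0 ≤ r → G r = g r := fun r hr => by
    rw [hGdef]; simp [max_eq_left hr]
  have hfG : ∀ x, |f x| ≤ G ‖x‖ := fun x => (hfg x).trans_eq (hGr _ (norm_nonneg x)).symm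
  have hintG : IntegrableOn (fun r => G r * r ^ (d - 1)) (Set.Ioi (0:ℝ)) := by
    refine hint.congr_fun (fun r hr => ?_) measurableSet_Ioi
    rw [hGr r (le_of_lt hr)]
  have hIn : ∀ n, 1 ≤ n → n ≤ d → IntegrableOn (fun r => G r * r ^ (n - 1)) (Set.Ioi (0:ℝ)) :=
    integ_pow_aux G hGm hGa hG0 d hintG
  have hint_eq : ∀ n : ℕ, (∫ r in Set.Ioi (0:ℝ), g r * r ^ (n - 1))
      = ∫ r in Set.Ioi (0:ℝ), G r * r ^ (n - 1) := fun n =>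
    setIntegral_congr_fun measurableSet_Ioi (fun r hr => by rw [hGr r (le_of_lt hr)])
  set A : (Fin d → ℤ) → ℝ≥0∞ := fun z => ENNReal.ofReal (G ‖latt d z‖) with hA
  set I : ℕ → ℝ≥0∞ :=
    fun n => ∫⁻ x : EuclideanSpace ℝ (Fin n), ENNReal.ofReal (G ‖x‖) with hI
  -- pointwise decomposition over supports
  have hpt : ∀ z : Fin d → ℤ,
      (∑ S : Finset (Fin d), Set.indicator {z' | ∀ i, z' i ≠ 0 ↔ i ∈ S} A z) = A z := by
    intro z
    set S₀ : Finset (Fin d) := Finset.univ.filter (fun i => z i ≠ 0) with hS₀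
    have h1 : ∀ S : Finset (Fin d),
        Set.indicator {z' | ∀ i, z' i ≠ 0 ↔ i ∈ S} A z = if S = S₀ then A z else 0 := by
      intro S
      by_cases h : S = S₀
      · subst h
        rw [if_pos rfl, Set.indicator_of_mem]
        intro i
        simp [hS₀]
      · rw [if_neg h, Set.indicator_of_notMem]
        intro hz
        exact h (Finset.ext fun i => by simp [hS₀, ← hz i])
    rw [Finset.sum_congr rfl fun S _ => h1 S, Finset.sum_ite_eq' Finset.univ S₀]
    simp
  have hdecomp : ∑' z, A z
      = ∑ S : Finset (Fin d), ∑' z : {z' : Fin d → ℤ // ∀ i, z' i ≠ 0 ↔ i ∈ S}, A z.1 := by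
    have h2 : ∀ S : Finset (Fin d),
        (∑' z : {z' : Fin d → ℤ // ∀ i, z' i ≠ 0 ↔ i ∈ S}, A z.1)
          = ∑' z, Set.indicator {z' | ∀ i, z' i ≠ 0 ↔ i ∈ S} A z :=
      fun S => tsum_subtype _ A
    rw [Finset.sum_congr rfl fun S _ => h2 S,
      ← Summable.tsum_finsetSum (fun S _ => ENNReal.summable)]
    exact (tsum_congr hpt).symm
  -- the empty support term
  have hempty : (∑' z : {z' : Fin d → ℤ // ∀ i, z' i ≠ 0 ↔ i ∈ (∅ : Finset (Fin d))}, A z.1)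
      = ENNReal.ofReal (G 0) := by
    have hu : ∀ z : {z' : Fin d → ℤ // ∀ i, z' i ≠ 0 ↔ i ∈ (∅ : Finset (Fin d))},
        z = ⟨fun _ => 0, by simp⟩ := by
      intro z
      apply Subtype.ext
      funext i
      by_contra hzi
      exact absurd ((z.2 i).mp hzi) (by simp)
    rw [tsum_eq_single (⟨fun _ => 0, by simp⟩ :
        {z' : Fin d → ℤ // ∀ i, z' i ≠ 0 ↔ i ∈ (∅ : Finset (Fin d))})
      (fun b hb => absurd (hu b) hb)]
    have : ‖latt d (fun _ => (0:ℤ))‖ = 0 := by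
      simp [latt, EuclideanSpace.norm_eq]
    rw [hA]
    simp only [this]
  -- per-support bound
  have hSb : ∀ S : Finset (Fin d),
      (∑' z : {z' : Fin d → ℤ // ∀ i, z' i ≠ 0 ↔ i ∈ S}, A z.1)
        ≤ if S.card = 0 then ENNReal.ofReal (G 0) else I S.card := by
    intro S
    by_cases hSe : S = ∅
    · subst hSe
      simp only [Finset.card_empty, if_pos rfl]
      exact le_of_eq hempty
    · rw [if_neg (by simpa [Finset.card_eq_zero] using hSe)]
      have heq : (∑' z : {z' : Fin d → ℤ // ∀ i, z' i ≠ 0 ↔ i ∈ S}, A z.1)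
          = ∑' w : Fin S.card → {m : ℤ // m ≠ 0},
              ENNReal.ofReal (G ‖latt S.card (fun j => (w j : ℤ))‖) := by
        rw [← Equiv.tsum_eq (suppEquiv d S)
          (fun w => ENNReal.ofReal (G ‖latt S.card (fun j => (w j : ℤ))‖))]
        exact tsum_congr fun z => by rw [hA]; simp only []; rw [suppEquiv_norm d S z]
      rw [heq]
      exact cube_sum_le S.card G hGa hGm
  -- assemble the counting bound
  set F : ℕ → ℝ≥0∞ := fun m => if m = 0 then ENNReal.ofReal (G 0) else I m with hF
  have hcount : ∑' z, A z ≤ ENNReal.ofReal (G 0) + ∑ m ∈ Finset.Icc 1 d, d.choose m • I m := by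
    rw [hdecomp]
    calc ∑ S : Finset (Fin d), ∑' z : {z' : Fin d → ℤ // ∀ i, z' i ≠ 0 ↔ i ∈ S}, A z.1
        ≤ ∑ S : Finset (Fin d), F S.card := Finset.sum_le_sum fun S _ => hSb S
      _ = ∑ S ∈ (Finset.univ : Finset (Fin d)).powerset, F S.card := by
          rw [Finset.powerset_univ]
      _ = ∑ m ∈ Finset.range ((Finset.univ : Finset (Fin d)).card + 1),
            (Finset.univ : Finset (Fin d)).card.choose m • F m :=
          Finset.sum_powerset_apply_card F
      _ = ∑ m ∈ Finset.range (d + 1), d.choose m • F m := by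
          rw [Finset.card_univ, Fintype.card_fin]
      _ = ENNReal.ofReal (G 0) + ∑ m ∈ Finset.Icc 1 d, d.choose m • I m := by
          have hr : Finset.range (d + 1) = insert 0 (Finset.Icc 1 d) := by
            ext m
            simp only [Finset.mem_range, Finset.mem_insert, Finset.mem_Icc]
            omega
          rw [hr, Finset.sum_insert (by simp)]
          congr 1
          · simp [hF]
          · refine Finset.sum_congr rfl fun m hm => ?_
            simp only [Finset.mem_Icc] at hm
            have hFm : F m = I m := by rw [hF]; exact if_neg (by omega)
            rw [hFm]
  -- evaluate I m
  have hIval : ∀ m, 1 ≤ m → m ≤ d →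
      I m = ENNReal.ofReal (2 * Real.pi ^ ((m:ℝ)/2) / Real.Gamma ((m:ℝ)/2)) *
        ENNReal.ofReal (∫ r in Set.Ioi (0:ℝ), G r * r ^ (m - 1)) := by
    intro m h1 h2
    rw [hI]
    simp only []
    rw [lintegral_norm_polar m h1 (fun y => ENNReal.ofReal (G y)) (by fun_prop),
      ball_const m h1]
    congr 1
    have hc : ∫⁻ y in Set.Ioi (0:ℝ), ENNReal.ofReal (y ^ (m-1)) * ENNReal.ofReal (G y)
        = ∫⁻ y in Set.Ioi (0:ℝ), ENNReal.ofReal (G y * y ^ (m-1)) := by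
      refine setLIntegral_congr_fun measurableSet_Ioi (fun y hy => ?_)
      rw [← ENNReal.ofReal_mul (pow_nonneg hy.le _), mul_comm]
    rw [hc, ← ofReal_integral_eq_lintegral_ofReal (hIn m h1 h2) ?_]
    filter_upwards [ae_restrict_mem measurableSet_Ioi] with r hr
    exact mul_nonneg (hG0 r) (pow_nonneg hr.le _)
  -- the ENNReal bound with explicit values
  set R : ℝ≥0∞ := ENNReal.ofReal (G 0) + ∑ m ∈ Finset.Icc 1 d, d.choose m •
      (ENNReal.ofReal (2 * Real.pi ^ ((m:ℝ)/2) / Real.Gamma ((m:ℝ)/2)) *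
        ENNReal.ofReal (∫ r in Set.Ioi (0:ℝ), G r * r ^ (m - 1))) with hR
  have htotal : ∑' z, A z ≤ R := by
    refine hcount.trans (le_of_eq ?_)
    rw [hR]
    congr 1
    refine Finset.sum_congr rfl fun m hm => ?_
    simp only [Finset.mem_Icc] at hm
    rw [hIval m hm.1 hm.2]
  have hRne : R ≠ ⊤ := by
    rw [hR]
    refine ENNReal.add_ne_top.mpr ⟨ENNReal.ofReal_ne_top, ?_⟩
    refine (ENNReal.sum_lt_top.mpr fun m _ => ?_).ne
    rw [nsmul_eq_mul]
    exact ENNReal.mul_lt_top (ENNReal.natCast_lt_top _)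
      (ENNReal.mul_lt_top ENNReal.ofReal_lt_top ENNReal.ofReal_lt_top)
  have hAne : ∑' z, A z ≠ ⊤ := (lt_of_le_of_lt htotal hRne.lt_top).ne
  have htoReal : ∀ z, (A z).toReal = G ‖latt d z‖ := fun z => ENNReal.toReal_ofReal (hG0 _)
  have hsumG : Summable (fun z : Fin d → ℤ => G ‖latt d z‖) :=
    (ENNReal.summable_toReal hAne).congr htoReal
  have hsumf : Summable (fun z : Fin d → ℤ => |f (latt d z)|) :=
    Summable.of_nonneg_of_le (fun z => abs_nonneg _) (fun z => hfG _) hsumG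
  refine ⟨hsumf, ?_⟩
  have hΓpos : ∀ m : ℕ, 1 ≤ m → 0 < Real.Gamma ((m:ℝ)/2) := fun m hm =>
    Real.Gamma_pos_of_pos (by positivity)
  calc ∑' z : Fin d → ℤ, |f (latt d z)|
      ≤ ∑' z : Fin d → ℤ, G ‖latt d z‖ := Summable.tsum_le_tsum (fun z => hfG _) hsumf hsumG
    _ = (∑' z, A z).toReal := by
        rw [ENNReal.tsum_toReal_eq (fun z => ENNReal.ofReal_ne_top)]
        exact tsum_congr fun z => (htoReal z).symm
    _ ≤ R.toReal := ENNReal.toReal_mono hRne htotal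
    _ = g 0 + ∑ n ∈ Finset.Icc 1 d,
          (d.choose n : ℝ) * (2 * Real.pi ^ ((n : ℝ) / 2) / Real.Gamma ((n : ℝ) / 2)) *
            ∫ r in Set.Ioi (0 : ℝ), g r * r ^ (n - 1) := by
        rw [hR, ENNReal.toReal_add ENNReal.ofReal_ne_top, ENNReal.toReal_ofReal (hG0 0),
          ENNReal.toReal_sum]
        · rw [hGr 0 le_rfl]
          congr 1
          refine Finset.sum_congr rfl fun m hm => ?_
          simp only [Finset.mem_Icc] at hm
          have hcpos : (0:ℝ) ≤ 2 * Real.pi ^ ((m:ℝ)/2) / Real.Gamma ((m:ℝ)/2) := by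
            have := hΓpos m hm.1
            positivity
          have hipos : (0:ℝ) ≤ ∫ r in Set.Ioi (0:ℝ), G r * r ^ (m - 1) := by
            refine setIntegral_nonneg measurableSet_Ioi fun r hr => ?_
            exact mul_nonneg (hG0 r) (pow_nonneg (le_of_lt hr) _)
          rw [nsmul_eq_mul, ENNReal.toReal_mul, ENNReal.toReal_mul, ENNReal.toReal_natCast,
            ENNReal.toReal_ofReal hcpos, ENNReal.toReal_ofReal hipos, hint_eq m, mul_assoc]
        · intro m _
          rw [nsmul_eq_mul]
          exact (ENNReal.mul_lt_top (ENNReal.natCast_lt_top _)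
            (ENNReal.mul_lt_top ENNReal.ofReal_lt_top ENNReal.ofReal_lt_top)).ne
        · refine (ENNReal.sum_lt_top.mpr fun m _ => ?_).ne
          rw [nsmul_eq_mul]
          exact ENNReal.mul_lt_top (ENNReal.natCast_lt_top _)
            (ENNReal.mul_lt_top ENNReal.ofReal_lt_top ENNReal.ofReal_lt_top)

end
end

section
/- Let f : ℝ^d → ℝ and g : [0,∞) → [0,∞) be a monotonically decreasing function with |f(x)| ≤ g(|x|) for all x and ∫₀^∞ g(r) r^{d-1} dr < ∞. Then for every γ > 0 and every a ∈ ℤ^d, the series ∑_{z∈ℤ^d} γ^d f(γz + a) is absolutely convergent. Moreover, if γ < 1, there exists a constant M_g depending only on g (and d) such that ∑_{z∈ℤ^d} |γ^d f(γz + a)| ≤ M_g, and M_g can be chosen additive and positively homogeneous in g. -/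
open MeasureTheory Filter Topology Set

noncomputable section

/-- Admissibility of the dominating function `g`: nonnegative and monotonically
decreasing on `[0,∞)`, with `∫₀^∞ g(r) r^{d-1} dr < ∞`. -/
def AdmissibleDom (d : ℕ) (g : ℝ → ℝ) : Prop :=
  AntitoneOn g (Set.Ici 0) ∧ (∀ r ∈ Set.Ici (0 : ℝ), 0 ≤ g r) ∧
    IntegrableOn (fun r => g r * r ^ (d - 1)) (Set.Ioi (0 : ℝ))

section AuxITSE

lemma itse_tilde_antitone {g : ℝ → ℝ} (hg : AntitoneOn g (Set.Ici 0)) :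
    Antitone (fun r : ℝ => g (max r 0)) := fun r s hrs =>
  hg (le_max_right r 0) (le_max_right s 0) (max_le_max hrs le_rfl)

lemma itse_tilde_measurable {g : ℝ → ℝ} (hg : AntitoneOn g (Set.Ici 0)) :
    Measurable (fun r : ℝ => g (max r 0)) := (itse_tilde_antitone hg).measurable

lemma itse_oneDim (d : ℕ) (g : ℝ → ℝ) (hg : AdmissibleDom d g) (R : ℝ) (hR : 0 ≤ R) :
    IntegrableOn (fun r : ℝ => g (max (r - R) 0) * r ^ (d - 1)) (Set.Ioi (0:ℝ)) := by
  obtain ⟨h1, h2, h3⟩ := hg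
  have hmeas : Measurable fun r : ℝ => g (max (r - R) 0) * r ^ (d - 1) :=
    ((itse_tilde_measurable h1).comp (measurable_id.sub_const R)).mul (measurable_id.pow_const _)
  have hg0 : ∀ t : ℝ, g (max t 0) ≤ g 0 :=
    fun t => h1 (le_refl (0:ℝ)) (le_max_right t 0) (le_max_right t 0)
  have hgnn : ∀ t : ℝ, 0 ≤ g (max t 0) := fun t => h2 _ (le_max_right t 0)
  have hsub : Set.Ioi (0:ℝ) ⊆ Set.Ioc 0 (2*R+2) ∪ Set.Ioi (2*R+2) := by
    intro r hr
    rcases le_or_gt r (2*R+2) with h | h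
    exacts [Or.inl ⟨hr, h⟩, Or.inr h]
  refine IntegrableOn.mono_set (IntegrableOn.union ?_ ?_) hsub
  · refine Measure.integrableOn_of_bounded (M := g 0 * (2*R+2) ^ (d-1))
      measure_Ioc_lt_top.ne hmeas.aestronglyMeasurable ?_
    filter_upwards [ae_restrict_mem measurableSet_Ioc] with r hr
    have h4 : 0 ≤ r := le_of_lt hr.1
    rw [Real.norm_eq_abs, abs_of_nonneg (mul_nonneg (hgnn _) (pow_nonneg h4 _))]
    exact mul_le_mul (hg0 _) (pow_le_pow_left₀ h4 hr.2 _) (pow_nonneg h4 _)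
      (h2 0 (le_refl (0:ℝ)))
  · have hI : IntegrableOn (fun r : ℝ => g (r - R) * (r - R) ^ (d-1)) (Set.Ioi R) := by
      have h4 := ((integrable_indicator_iff measurableSet_Ioi).2 h3).comp_sub_right R
      have heq : (fun r : ℝ => (Set.Ioi (0:ℝ)).indicator (fun u => g u * u ^ (d-1)) (r - R))
          = (Set.Ioi R).indicator (fun r => g (r - R) * (r - R) ^ (d-1)) := by
        funext r
        by_cases hr : r ∈ Set.Ioi R
        · rw [Set.indicator_of_mem hr, Set.indicator_of_mem (by simp [sub_pos]; exact hr)]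
        · rw [Set.indicator_of_notMem hr, Set.indicator_of_notMem (by simpa [sub_pos] using hr)]
      rw [heq] at h4
      exact (integrable_indicator_iff measurableSet_Ioi).1 h4
    have hI2 : IntegrableOn (fun r : ℝ => 2^(d-1) * (g (r - R) * (r - R) ^ (d-1)))
        (Set.Ioi (2*R+2)) :=
      ((hI.mono_set (Set.Ioi_subset_Ioi (by linarith))).const_mul _)
    refine hI2.mono' hmeas.aestronglyMeasurable.restrict ?_
    filter_upwards [ae_restrict_mem measurableSet_Ioi] with r hr
    have h5 : R < r := by simp only [Set.mem_Ioi] at hr; linarith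
    have h6 : (0:ℝ) ≤ r - R := by linarith
    have h7 : max (r - R) 0 = r - R := max_eq_left h6
    rw [Real.norm_eq_abs, h7,
      abs_of_nonneg (mul_nonneg (h2 _ h6) (pow_nonneg (by linarith : (0:ℝ) ≤ r) _))]
    have h8 : r ≤ 2 * (r - R) := by simp only [Set.mem_Ioi] at hr; linarith
    calc g (r - R) * r ^ (d-1) ≤ g (r - R) * (2*(r-R)) ^ (d-1) :=
          mul_le_mul_of_nonneg_left (pow_le_pow_left₀ (by linarith) h8 _) (h2 _ h6)
      _ = 2^(d-1) * (g (r - R) * (r - R) ^ (d-1)) := by rw [mul_pow]; ring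

lemma itse_keyA (d : ℕ) (hd : 0 < d) (g : ℝ → ℝ) (hg : AdmissibleDom d g) (R : ℝ) (hR : 0 ≤ R) :
    Integrable (fun x : EuclideanSpace ℝ (Fin d) => g (max (‖x‖ - R) 0)) := by
  obtain ⟨hg1, hg2, hg3⟩ := hg
  haveI : Nonempty (Fin d) := ⟨⟨0, hd⟩⟩
  haveI : Nontrivial (EuclideanSpace ℝ (Fin d)) :=
    ⟨0, EuclideanSpace.single ⟨0, hd⟩ (1:ℝ), by
      intro h
      have := congrArg norm h
      simp [EuclideanSpace.norm_single] at this⟩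
  set E := EuclideanSpace ℝ (Fin d) with hE
  set k : ℝ → ℝ := fun r => g (max (r - R) 0) with hk
  have hmk : Measurable k := (itse_tilde_measurable hg1).comp (measurable_id.sub_const R)
  have h1 : Integrable (fun r : Set.Ioi (0:ℝ) => k r.1 * (r.1 ^ (d-1)))
      (Measure.comap Subtype.val volume) := by
    have h := (MeasurableEmbedding.subtype_coe (measurableSet_Ioi (a := (0:ℝ)))).integrable_map_iff
      (μ := Measure.comap Subtype.val (volume : Measure ℝ)) (g := fun r : ℝ => k r * r ^ (d-1))
    rw [map_comap_subtype_coe measurableSet_Ioi] at h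
    exact h.1 (itse_oneDim d g ⟨hg1, hg2, hg3⟩ R hR)
  have h2 : Integrable (fun r : Set.Ioi (0:ℝ) => k r.1) (Measure.volumeIoiPow (d-1)) := by
    rw [Measure.volumeIoiPow, integrable_withDensity_iff
      ((measurable_subtype_coe.pow_const _).ennreal_ofReal)
      (ae_of_all _ fun r => ENNReal.ofReal_lt_top)]
    refine h1.congr (ae_of_all _ fun r => ?_)
    show k r.1 * (r.1:ℝ)^(d-1) = k r.1 * (ENNReal.ofReal ((r.1:ℝ)^(d-1))).toReal
    rw [ENNReal.toReal_ofReal (pow_nonneg (le_of_lt r.2) _)]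
  have h3 : Integrable (fun p : Metric.sphere (0:E) 1 × Set.Ioi (0:ℝ) => k p.2.1)
      (((volume : Measure E).toSphere).prod (Measure.volumeIoiPow (d-1))) := by
    have := (integrable_const (1:ℝ) (μ := (volume : Measure E).toSphere)).smul_prod h2
    simpa using this
  have hfr : Module.finrank ℝ E = d := finrank_euclideanSpace_fin
  have hmp := (volume : Measure E).measurePreserving_homeomorphUnitSphereProd
  rw [hfr] at hmp
  have h4 : Integrable (fun x : ({0}ᶜ : Set E) => k ‖x.1‖) (Measure.comap Subtype.val volume) :=
    by have := (hmp.integrable_comp_emb (Homeomorph.measurableEmbedding _)).2 h3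
       simpa only [Function.comp_def, homeomorphUnitSphereProd_apply_snd_coe] using this
  have hins := (MeasurableEmbedding.subtype_coe
      (measurableSet_singleton (0:E)).compl).integrable_map_iff
      (μ := Measure.comap Subtype.val (volume : Measure E)) (g := fun x : E => k ‖x‖)
  rw [map_comap_subtype_coe (measurableSet_singleton _).compl] at hins
  have h6 : IntegrableOn (fun x : E => k ‖x‖) ({0}ᶜ) volume := hins.2 h4
  rw [IntegrableOn, MeasureTheory.restrict_compl_singleton] at h6
  exact h6

lemma itse_keyB (d : ℕ) (hd : 0 < d) (g : ℝ → ℝ) (hg : AdmissibleDom d g)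
    (γ : ℝ) (hγ : 0 < γ) (a : Fin d → ℤ) (s : Finset (Fin d → ℤ)) :
    ∑ z ∈ s, γ ^ d * g ‖γ • latt d z + latt d a‖ ≤
      ∫ x : EuclideanSpace ℝ (Fin d), g (max (‖x‖ - Real.sqrt d * γ) 0) := by
  obtain ⟨hg1, hg2, -⟩ := id hg
  have hR : 0 ≤ Real.sqrt d * γ := mul_nonneg (Real.sqrt_nonneg _) hγ.le
  set H : EuclideanSpace ℝ (Fin d) → ℝ := fun x => g (max (‖x‖ - Real.sqrt d * γ) 0) with hHdef
  have hH : Integrable H := itse_keyA d hd g hg _ hR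
  set c : (Fin d → ℤ) → EuclideanSpace ℝ (Fin d) := fun z => γ • latt d z + latt d a with hc
  have hca : ∀ z i, c z i = γ * (z i : ℝ) + (a i : ℝ) := by
    intro z i
    simp [hc, latt, PiLp.add_apply, PiLp.smul_apply, smul_eq_mul]
  set Q : (Fin d → ℤ) → Set (EuclideanSpace ℝ (Fin d)) :=
    fun z => {x | ∀ i, c z i ≤ x i ∧ x i < c z i + γ} with hQ
  have hQpi : ∀ z, (MeasurableEquiv.toLp 2 (Fin d → ℝ)).symm ⁻¹'
      (Set.univ.pi fun i => Set.Ico (c z i) (c z i + γ)) = Q z := by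
    intro z; ext x
    simp [hQ, Set.mem_pi, Set.mem_Ico]
  have hQm : ∀ z, MeasurableSet (Q z) := fun z => by
    rw [← hQpi]
    exact (MeasurableEquiv.toLp 2 (Fin d → ℝ)).symm.measurable
      (MeasurableSet.univ_pi fun i => measurableSet_Ico)
  have hQv : ∀ z, volume (Q z) = ENNReal.ofReal γ ^ d := by
    intro z
    rw [← hQpi,
      (EuclideanSpace.volume_preserving_symm_measurableEquiv_toLp (Fin d)).measure_preimage
        (MeasurableSet.univ_pi fun i => measurableSet_Ico).nullMeasurableSet,
      volume_pi_pi]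
    simp [Real.volume_Ico]
  have hQvr : ∀ z, (volume (Q z)).toReal = γ ^ d := by
    intro z
    rw [hQv, ENNReal.toReal_pow, ENNReal.toReal_ofReal hγ.le]
  have hQfin : ∀ z, volume (Q z) < ⊤ := fun z => by
    rw [hQv]; exact ENNReal.pow_lt_top ENNReal.ofReal_lt_top
  have hdisj : (↑s : Set (Fin d → ℤ)).Pairwise (Function.onFun Disjoint Q) := by
    intro z hz z' hz' hne
    refine Set.disjoint_left.2 fun x hxz hxz' => ?_
    obtain ⟨i, hi⟩ : ∃ i, z i ≠ z' i := by
      by_contra h; push_neg at h; exact hne (funext h)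
    have h1 := hxz i; have h2 := hxz' i
    rw [hca] at h1 h2
    have e1 : (z i : ℝ) < (z' i : ℝ) + 1 := by nlinarith [h1.1, h2.2]
    have e2 : (z' i : ℝ) < (z i : ℝ) + 1 := by nlinarith [h2.1, h1.2]
    have e1' : z i < z' i + 1 := by exact_mod_cast e1
    have e2' : z' i < z i + 1 := by exact_mod_cast e2
    omega
  have hpt : ∀ z, ∀ x ∈ Q z, g ‖c z‖ ≤ H x := by
    intro z x hx
    have hxc : ‖x - c z‖ ≤ Real.sqrt d * γ := by
      rw [EuclideanSpace.norm_eq]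
      have hb : ∀ i, ‖(x - c z) i‖ ^ 2 ≤ γ ^ 2 := by
        intro i
        have h := hx i
        have he : (x - c z) i = x i - c z i := rfl
        rw [he, Real.norm_eq_abs, sq_abs]
        nlinarith [h.1, h.2]
      calc Real.sqrt (∑ i, ‖(x - c z) i‖ ^ 2)
          ≤ Real.sqrt (∑ _i : Fin d, γ ^ 2) :=
            Real.sqrt_le_sqrt (Finset.sum_le_sum fun i _ => hb i)
        _ = Real.sqrt ((d : ℝ) * γ ^ 2) := by
            rw [Finset.sum_const, Finset.card_univ, Fintype.card_fin, nsmul_eq_mul]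
        _ = Real.sqrt d * γ := by
            rw [Real.sqrt_mul (Nat.cast_nonneg d), Real.sqrt_sq hγ.le]
    have hxn : ‖x‖ - Real.sqrt d * γ ≤ ‖c z‖ := by
      have h := norm_sub_norm_le x (c z)
      linarith
    exact hg1 (Set.mem_Ici.2 (le_max_right _ _)) (Set.mem_Ici.2 (norm_nonneg _))
      (max_le hxn (norm_nonneg _))
  have hterm : ∀ z, γ ^ d * g ‖c z‖ ≤ ∫ x in Q z, H x := by
    intro z
    have h1 : ∫ _x in Q z, g ‖c z‖ = γ ^ d * g ‖c z‖ := by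
      rw [setIntegral_const, measureReal_def, hQvr z, smul_eq_mul]
    rw [← h1]
    exact setIntegral_mono_on (integrableOn_const (hQfin z).ne)
      hH.integrableOn (hQm z) (fun x hx => hpt z x hx)
  calc ∑ z ∈ s, γ ^ d * g ‖c z‖
      ≤ ∑ z ∈ s, ∫ x in Q z, H x := Finset.sum_le_sum fun z _ => hterm z
    _ = ∫ x in ⋃ z ∈ s, Q z, H x :=
        (integral_biUnion_finset s (fun z _ => hQm z) hdisj
          (fun z _ => hH.integrableOn)).symm
    _ ≤ ∫ x, H x := setIntegral_le_integral hH
        (ae_of_all _ fun x => hg2 _ (Set.mem_Ici.2 (le_max_right _ _)))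

lemma itse_termBound (d : ℕ) (f : EuclideanSpace ℝ (Fin d) → ℝ) (g : ℝ → ℝ)
    (hf : ∀ x, |f x| ≤ g ‖x‖) (γ : ℝ) (hγ : 0 < γ) (a : Fin d → ℤ) (z : Fin d → ℤ) :
    |γ ^ d * f (γ • latt d z + latt d a)| ≤ γ ^ d * g ‖γ • latt d z + latt d a‖ := by
  rw [abs_mul, abs_pow, abs_of_pos hγ]
  exact mul_le_mul_of_nonneg_left (hf _) (pow_nonneg hγ.le _)

end AuxITSE

/-- **Integral test for series estimates — II.**
If `|f x| ≤ g ‖x‖` with `g` admissible, then for every `γ > 0` and `a ∈ ℤ^d` the series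
`∑_{z∈ℤ^d} γ^d f(γ z + a)` is absolutely convergent; moreover there is a constant `M g`,
depending only on `g` (and `d`), additive and positively homogeneous in `g`, such that for
`γ ∈ (0,1)` one has `∑_{z∈ℤ^d} |γ^d f(γ z + a)| ≤ M g`. -/
theorem integral_test_series_estimate_II (d : ℕ) (hd : 0 < d) :
    (∀ (f : EuclideanSpace ℝ (Fin d) → ℝ) (g : ℝ → ℝ), AdmissibleDom d g →
      (∀ x, |f x| ≤ g ‖x‖) →
      ∀ γ : ℝ, 0 < γ → ∀ a : Fin d → ℤ,
        Summable (fun z : Fin d → ℤ => |γ ^ d * f (γ • latt d z + latt d a)|)) ∧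
    ∃ M : (ℝ → ℝ) → ℝ,
      (∀ g₁ g₂ : ℝ → ℝ, AdmissibleDom d g₁ → AdmissibleDom d g₂ →
        M (g₁ + g₂) = M g₁ + M g₂) ∧
      (∀ c : ℝ, 0 ≤ c → ∀ g : ℝ → ℝ, AdmissibleDom d g →
        M (fun r => c * g r) = c * M g) ∧
      (∀ (f : EuclideanSpace ℝ (Fin d) → ℝ) (g : ℝ → ℝ), AdmissibleDom d g →
        (∀ x, |f x| ≤ g ‖x‖) →
        ∀ γ : ℝ, 0 < γ → γ < 1 → ∀ a : Fin d → ℤ,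
          ∑' z : Fin d → ℤ, |γ ^ d * f (γ • latt d z + latt d a)| ≤ M g) := by
  have hsm : ∀ (f : EuclideanSpace ℝ (Fin d) → ℝ) (g : ℝ → ℝ), AdmissibleDom d g →
      (∀ x, |f x| ≤ g ‖x‖) →
      ∀ γ : ℝ, 0 < γ → ∀ a : Fin d → ℤ,
        Summable (fun z : Fin d → ℤ => |γ ^ d * f (γ • latt d z + latt d a)|) := by
    intro f g hg hf γ hγ a
    refine summable_of_sum_le (c := ∫ x : EuclideanSpace ℝ (Fin d),
      g (max (‖x‖ - Real.sqrt d * γ) 0)) (fun z => abs_nonneg _) (fun u => ?_)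
    calc ∑ z ∈ u, |γ ^ d * f (γ • latt d z + latt d a)|
        ≤ ∑ z ∈ u, γ ^ d * g ‖γ • latt d z + latt d a‖ :=
          Finset.sum_le_sum fun z _ => itse_termBound d f g hf γ hγ a z
      _ ≤ _ := itse_keyB d hd g hg γ hγ a u
  refine ⟨hsm, fun g => ∫ x : EuclideanSpace ℝ (Fin d), g (max (‖x‖ - Real.sqrt d) 0),
    ?_, ?_, ?_⟩
  · intro g₁ g₂ hg₁ hg₂
    simp only [Pi.add_apply]
    exact integral_add (itse_keyA d hd g₁ hg₁ _ (Real.sqrt_nonneg _))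
      (itse_keyA d hd g₂ hg₂ _ (Real.sqrt_nonneg _))
  · intro c _ g _
    exact integral_const_mul c _
  · intro f g hg hf γ hγ hγ1 a
    have hmono : (∫ x : EuclideanSpace ℝ (Fin d), g (max (‖x‖ - Real.sqrt d * γ) 0)) ≤
        ∫ x : EuclideanSpace ℝ (Fin d), g (max (‖x‖ - Real.sqrt d) 0) := by
      refine integral_mono (itse_keyA d hd g hg _ (mul_nonneg (Real.sqrt_nonneg _) hγ.le))
        (itse_keyA d hd g hg _ (Real.sqrt_nonneg _)) (fun x => ?_)
      have harg : max (‖x‖ - Real.sqrt d) 0 ≤ max (‖x‖ - Real.sqrt d * γ) 0 := by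
        have : Real.sqrt d * γ ≤ Real.sqrt d :=
          mul_le_of_le_one_right (Real.sqrt_nonneg _) hγ1.le
        exact max_le_max (by linarith) le_rfl
      exact hg.1 (Set.mem_Ici.2 (le_max_right _ _)) (Set.mem_Ici.2 (le_max_right _ _)) harg
    refine le_trans (Summable.tsum_le_of_sum_le (hsm f g hg hf γ hγ a) fun u => ?_) hmono
    calc ∑ z ∈ u, |γ ^ d * f (γ • latt d z + latt d a)|
        ≤ ∑ z ∈ u, γ ^ d * g ‖γ • latt d z + latt d a‖ :=
          Finset.sum_le_sum fun z _ => itse_termBound d f g hf γ hγ a z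
      _ ≤ _ := itse_keyB d hd g hg γ hγ a u

end
end

section
/- Let X be a compact topological space and (f_n)_{n∈ℕ} a sequence of lower semicontinuous real-valued functionals on X converging pointwise to a functional f on X. Assume that for every η > 0 there exists N ∈ ℕ such that f_m ≥ f_n − η pointwise for all natural numbers m ≥ n ≥ N. Then lim_{n→∞} inf_{x∈X} f_n(x) = inf_{x∈X} f(x), and this common value is finite (> −∞). -/
open Filter Topology

/-- A lower semicontinuous real function on a compact space is bounded below. -/
lemma lsc_bddBelow_range {X : Type*} [TopologicalSpace X] [CompactSpace X]
    {g : X → ℝ} (hg : LowerSemicontinuous g) : BddBelow (Set.range g) := by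
  have hcov : (Set.univ : Set X) ⊆ ⋃ k : ℕ, g ⁻¹' Set.Ioi (-(k : ℝ)) := by
    intro x _
    obtain ⟨k, hk⟩ := exists_nat_gt (-(g x))
    exact Set.mem_iUnion.2 ⟨k, by simp [Set.mem_preimage]; linarith⟩
  obtain ⟨t, ht⟩ := isCompact_univ.elim_finite_subcover
    (fun k : ℕ => g ⁻¹' Set.Ioi (-(k : ℝ))) (fun k => hg.isOpen_preimage _) hcov
  refine ⟨-(t.sup id : ℕ), ?_⟩
  rintro y ⟨x, rfl⟩
  obtain ⟨k, hk, hxk⟩ := Set.mem_iUnion₂.1 (ht (Set.mem_univ x))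
  have hle : (k : ℝ) ≤ (t.sup id : ℕ) := by
    exact_mod_cast Finset.le_sup (f := id) hk
  have : -(k : ℝ) < g x := hxk
  linarith

/-- **Limiting variational problem for increasing functionals (Dini-type lemma).**
Let `(F n)` be lower semicontinuous functionals on a compact space `X`, converging
pointwise to `f`, and such that for every η > 0 there is `N` with `F m ≥ F n − η`
for all `m ≥ n ≥ N`.  Then `inf F n (X) → inf f (X)`, and the limit is finite
(`f` is bounded below). -/
theorem limiting_variational_problem
    {X : Type*} [TopologicalSpace X] [CompactSpace X] [Nonempty X]
    (F : ℕ → X → ℝ) (f : X → ℝ)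
    (hlsc : ∀ n, LowerSemicontinuous (F n))
    (hpt : ∀ x, Tendsto (fun n => F n x) atTop (𝓝 (f x)))
    (hmono : ∀ η : ℝ, 0 < η → ∃ N : ℕ, ∀ m n : ℕ, N ≤ n → n ≤ m →
      ∀ x, F n x - η ≤ F m x) :
    Tendsto (fun n => ⨅ x, F n x) atTop (𝓝 (⨅ x, f x)) ∧ BddBelow (Set.range f) := by
  have hbddF : ∀ n, BddBelow (Set.range (F n)) := fun n => lsc_bddBelow_range (hlsc n)
  -- key: for suitable N, `F n x - η ≤ f x` for all `n ≥ N`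
  have key : ∀ η : ℝ, 0 < η → ∃ N : ℕ, ∀ n, N ≤ n → ∀ x, F n x - η ≤ f x := by
    intro η hη
    obtain ⟨N, hN⟩ := hmono η hη
    refine ⟨N, fun n hn x => ?_⟩
    refine ge_of_tendsto (hpt x) ?_
    filter_upwards [eventually_ge_atTop n] with m hm
    exact hN m n hn hm x
  -- f is bounded below
  have hbf : BddBelow (Set.range f) := by
    obtain ⟨N, hN⟩ := key 1 one_pos
    obtain ⟨b, hb⟩ := hbddF N
    refine ⟨b - 1, ?_⟩
    rintro y ⟨x, rfl⟩
    have h1 := hN N le_rfl x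
    have h2 := hb (Set.mem_range_self (f := F N) x)
    linarith
  refine ⟨?_, hbf⟩
  rw [Metric.tendsto_atTop]
  intro ε hε
  set η := ε / 4 with hηdef
  have hη : 0 < η := by positivity
  obtain ⟨N, hN⟩ := hmono η hη
  have hkey : ∀ n, N ≤ n → ∀ x, F n x - η ≤ f x := by
    intro n hn x
    refine ge_of_tendsto (hpt x) ?_
    filter_upwards [eventually_ge_atTop n] with m hm
    exact hN m n hn hm x
  -- upper bound: for n ≥ N, ⨅ F n ≤ ⨅ f + η
  have hupper : ∀ n, N ≤ n → (⨅ x, F n x) ≤ (⨅ x, f x) + η := by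
    intro n hn
    have : ∀ x, (⨅ x, F n x) - η ≤ f x := fun x => by
      have h1 := ciInf_le (hbddF n) x
      have h2 := hkey n hn x
      linarith
    have := le_ciInf this
    linarith
  -- lower bound via compactness
  set c : ℝ := (⨅ x, f x) - η with hc
  have hcov : (Set.univ : Set X) ⊆ ⋃ k : ℕ, (F (N + k)) ⁻¹' Set.Ioi c := by
    intro x _
    have hfx : c < f x := by
      have := ciInf_le hbf x
      simp only [hc]
      linarith
    have := (hpt x).eventually (eventually_gt_nhds hfx)
    obtain ⟨m, hm⟩ := (this.and (eventually_ge_atTop N)).exists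
    exact Set.mem_iUnion.2 ⟨m - N, by
      simpa [Nat.add_sub_cancel' hm.2] using hm.1⟩
  obtain ⟨t, ht⟩ := isCompact_univ.elim_finite_subcover
    (fun k : ℕ => (F (N + k)) ⁻¹' Set.Ioi c) (fun k => (hlsc _).isOpen_preimage _) hcov
  set M : ℕ := N + t.sup id with hM
  have hlow : ∀ m, M ≤ m → c - 2 * η ≤ ⨅ x, F m x := by
    intro m hm
    refine le_ciInf fun x => ?_
    obtain ⟨k, hk, hxk⟩ := Set.mem_iUnion₂.1 (ht (Set.mem_univ x))
    have hkM : N + k ≤ M := by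
      simp only [hM]
      exact Nat.add_le_add_left (Finset.le_sup (f := id) hk) N
    have h1 : F (N + k) x - η ≤ F m x :=
      hN m (N + k) (Nat.le_add_right N k) (hkM.trans hm) x
    have h2 : c < F (N + k) x := hxk
    linarith
  refine ⟨M, fun n hn => ?_⟩
  have h1 := hupper n (le_trans (Nat.le_add_right N _) hn)
  have h2 := hlow n hn
  rw [Real.dist_eq, abs_lt]
  constructor <;> simp only [hc] at h2 <;> [linarith; linarith]
end
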